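/- arXiv:2106.04333 — 4 statements merged into one kernel-verified Lean document; each statement's English description precedes it below -/
import Mathlib

section
/- Let g(x) = (1+x)·log(1+x) − x for x ≥ 0. Then for every x ≥ 0 one has g(2x/3 + √(2x)) ≥ x. Equivalently, the inverse function g⁻¹ (on [0,∞)) satisfies g⁻¹(x) ≤ 2x/3 + √(2x) for all x > 0. -/
/-- The function `g(x) = (1+x) log(1+x) - x`. -/
noncomputable def g (y : ℝ) : ℝ := (1 + y) * Real.log (1 + y) - y

lemma hasDerivF (y : ℝ) (hy : 0 ≤ y) :
    HasDerivAt (fun y => Real.log (1 + y) - 2 * y / (2 + y))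
      (1 / (1 + y) - 4 / (2 + y) ^ 2) y := by
  have h1 : HasDerivAt (fun y : ℝ => 1 + y) 1 y := by
    simpa using (hasDerivAt_id y).const_add 1
  have hlog : HasDerivAt (fun y => Real.log (1 + y)) (1 / (1 + y)) y := by
    simpa using h1.log (by linarith)
  have hnum : HasDerivAt (fun y : ℝ => 2 * y) 2 y := by
    simpa using (hasDerivAt_id y).const_mul 2
  have hden : HasDerivAt (fun y : ℝ => 2 + y) 1 y := (hasDerivAt_id y).const_add 2
  have hq := hnum.div hden (by linarith : (2:ℝ) + y ≠ 0)
  convert hlog.sub hq using 1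
  have h2 : (2:ℝ) + y ≠ 0 := by linarith
  · rfl
  · rfl
  · rfl
  field_simp
  ring

lemma log_ge (y : ℝ) (hy : 0 ≤ y) : Real.log (1 + y) ≥ 2 * y / (2 + y) := by
  have key : MonotoneOn (fun y => Real.log (1 + y) - 2 * y / (2 + y)) (Set.Ici 0) := by
    apply monotoneOn_of_deriv_nonneg (convex_Ici 0)
    · exact fun z hz => (hasDerivF z hz).continuousAt.continuousWithinAt
    · intro z hz
      rw [interior_Ici] at hz
      exact (hasDerivF z hz.le).differentiableAt.differentiableWithinAt
    · intro z hz
      rw [interior_Ici] at hz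
      have hz' : (0:ℝ) ≤ z := le_of_lt hz
      rw [(hasDerivF z hz').deriv]
      rw [sub_nonneg, div_le_div_iff₀ (by positivity) (by positivity)]
      nlinarith
  have h0 : (fun y => Real.log (1 + y) - 2 * y / (2 + y)) 0 = 0 := by norm_num
  have := key (Set.mem_Ici.2 le_rfl) (Set.mem_Ici.2 hy) hy
  rw [h0] at this
  linarith [this]

lemma hasDerivG (y : ℝ) (hy : 0 ≤ y) :
    HasDerivAt (fun y => (1 + y) * Real.log (1 + y) - y - 3 * y ^ 2 / (2 * y + 6))
      (Real.log (1 + y) - (6 * y ^ 2 + 36 * y) / (2 * y + 6) ^ 2) y := by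
  have h1 : HasDerivAt (fun y : ℝ => 1 + y) 1 y := by
    simpa using (hasDerivAt_id y).const_add 1
  have hlog : HasDerivAt (fun y => Real.log (1 + y)) (1 / (1 + y)) y := by
    simpa using h1.log (by linarith)
  have hmul := h1.mul hlog
  have hnum : HasDerivAt (fun y : ℝ => 3 * y ^ 2) (3 * (2 * y)) y := by
    simpa using ((hasDerivAt_pow 2 y)).const_mul 3
  have hden : HasDerivAt (fun y : ℝ => 2 * y + 6) 2 y := by
    simpa using ((hasDerivAt_id y).const_mul 2).add_const 6
  have hq := hnum.div hden (by linarith : (2:ℝ) * y + 6 ≠ 0)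
  have := (hmul.sub (hasDerivAt_id y)).sub hq
  convert this using 1
  have h1y : (1:ℝ) + y ≠ 0 := by linarith
  have h2 : (2:ℝ) * y + 6 ≠ 0 := by linarith
  · rfl
  · rfl
  · rfl
  field_simp
  ring

lemma g_ge (y : ℝ) (hy : 0 ≤ y) : g y ≥ 3 * y ^ 2 / (2 * y + 6) := by
  have key : MonotoneOn (fun y => (1 + y) * Real.log (1 + y) - y - 3 * y ^ 2 / (2 * y + 6))
      (Set.Ici 0) := by
    apply monotoneOn_of_deriv_nonneg (convex_Ici 0)
    · exact fun z hz => (hasDerivG z hz).continuousAt.continuousWithinAt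
    · intro z hz
      rw [interior_Ici] at hz
      exact (hasDerivG z hz.le).differentiableAt.differentiableWithinAt
    · intro z hz
      rw [interior_Ici] at hz
      have hz' : (0:ℝ) ≤ z := le_of_lt hz
      rw [(hasDerivG z hz').deriv]
      have hlog := log_ge z hz'
      have hcomp : (6 * z ^ 2 + 36 * z) / (2 * z + 6) ^ 2 ≤ 2 * z / (2 + z) := by
        rw [div_le_div_iff₀ (by positivity) (by positivity)]
        nlinarith [pow_nonneg hz' 3]
      linarith
  have h0 : (fun y => (1 + y) * Real.log (1 + y) - y - 3 * y ^ 2 / (2 * y + 6)) 0 = 0 := by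
    norm_num
  have := key (Set.mem_Ici.2 le_rfl) (Set.mem_Ici.2 hy) hy
  rw [h0] at this
  simp only [g]
  linarith [this]

/-- For every `x ≥ 0`, `g(2x/3 + √(2x)) ≥ x`; equivalently, the inverse of `g`
on `[0,∞)` satisfies `g⁻¹(x) ≤ 2x/3 + √(2x)`. -/
theorem stmt_0 (x : ℝ) (hx : 0 ≤ x) :
    g (2 * x / 3 + Real.sqrt (2 * x)) ≥ x := by
  have hsnn : 0 ≤ Real.sqrt (2 * x) := Real.sqrt_nonneg _
  have hs2 : Real.sqrt (2 * x) ^ 2 = 2 * x := Real.sq_sqrt (by linarith)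
  have hynn : 0 ≤ 2 * x / 3 + Real.sqrt (2 * x) := by positivity
  have h1 := g_ge _ hynn
  have h2 : x ≤ 3 * (2 * x / 3 + Real.sqrt (2 * x)) ^ 2
      / (2 * (2 * x / 3 + Real.sqrt (2 * x)) + 6) := by
    rw [le_div_iff₀ (by positivity)]
    nlinarith [mul_nonneg hx hsnn]
  linarith
end

section
/- Let L > 0, λ₀ > 0, 0 ≤ τ₁ < τ₂ ≤ 1, and let N be a Poisson random variable with parameter L·x where x > 0. Define T = (N² − N)/(L²(τ₂−τ₁)) − 2λ₀·N/L + λ₀²(τ₂−τ₁). Then Var(T) = (4x/L)·( x/(τ₂−τ₁) − λ₀ )² + (2/L²)·x²/(τ₂−τ₁)². -/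
/-- The Poisson probability mass function with parameter `ξ`. -/
noncomputable def poissonPMF (ξ : ℝ) (k : ℕ) : ℝ :=
  Real.exp (-ξ) * ξ ^ k / Nat.factorial k

/-- The quadratic statistic `T_{τ₁,τ₂}` evaluated at a count `k`:
`T = (k² − k)/(L²(τ₂−τ₁)) − 2λ₀ k / L + λ₀² (τ₂−τ₁)`. -/
noncomputable def Tstat (L lam0 τ₁ τ₂ : ℝ) (k : ℕ) : ℝ :=
  ((k : ℝ) ^ 2 - k) / (L ^ 2 * (τ₂ - τ₁)) - 2 * lam0 * k / L + lam0 ^ 2 * (τ₂ - τ₁)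

lemma prod_shift (m : ℕ) : ∀ j : ℕ, ∏ i ∈ Finset.range m, (((j + m : ℕ) : ℝ) - i)
    = (Nat.factorial (j + m) : ℝ) / Nat.factorial j := by
  induction m with
  | zero => intro j; simp [Nat.factorial_ne_zero]
  | succ m ih =>
    intro j
    rw [Finset.prod_range_succ]
    have h := ih (j + 1)
    have e : j + 1 + m = j + (m + 1) := by ring
    rw [e] at h
    rw [h]
    have h2 : (((j + (m + 1) : ℕ) : ℝ) - m) = ((j : ℝ) + 1) := by
      push_cast; ring
    rw [h2, Nat.factorial_succ]
    have hj : (0 : ℝ) < Nat.factorial j := by positivity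
    push_cast
    field_simp

lemma hasSum_poisson_prod (ξ : ℝ) (m : ℕ) :
    HasSum (fun k : ℕ => poissonPMF ξ k * ∏ i ∈ Finset.range m, ((k : ℝ) - i)) (ξ ^ m) := by
  set f : ℕ → ℝ := fun k => poissonPMF ξ k * ∏ i ∈ Finset.range m, ((k : ℝ) - i) with hf
  have hzero : ∀ i < m, f i = 0 := by
    intro i hi
    have : (∏ j ∈ Finset.range m, ((i : ℝ) - j)) = 0 :=
      Finset.prod_eq_zero (Finset.mem_range.mpr hi) (by simp)
    simp [hf, this]
  have hshift : ∀ j : ℕ, f (j + m) = Real.exp (-ξ) * ξ ^ m * (ξ ^ j / Nat.factorial j) := by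
    intro j
    have hfac : (0 : ℝ) < Nat.factorial j := by positivity
    have hfac2 : (0 : ℝ) < Nat.factorial (j + m) := by positivity
    simp only [hf, poissonPMF, prod_shift m j]
    rw [pow_add]
    field_simp
  have hexp : HasSum (fun j : ℕ => ξ ^ j / Nat.factorial j) (Real.exp ξ) := by
    have := NormedSpace.expSeries_div_hasSum_exp (𝔸 := ℝ) ξ
    rwa [← Real.exp_eq_exp_ℝ] at this
  have h2 : HasSum (fun j => f (j + m)) (ξ ^ m) := by
    have h3 := hexp.mul_left (Real.exp (-ξ) * ξ ^ m)
    have hval : Real.exp (-ξ) * ξ ^ m * Real.exp ξ = ξ ^ m := by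
      rw [mul_comm (Real.exp (-ξ)) (ξ ^ m), mul_assoc, ← Real.exp_add]
      simp
    rw [hval] at h3
    exact h3.congr_fun fun j => hshift j
  have h4 := (hasSum_nat_add_iff (f := f) m).mp h2
  rwa [Finset.sum_eq_zero (fun i hi => hzero i (Finset.mem_range.mp hi)), add_zero] at h4

/-- If `N ~ Poisson(Lx)`, then
`Var(T) = (4x/L)(x/(τ₂−τ₁) − λ₀)² + (2/L²) x²/(τ₂−τ₁)²`. -/
theorem stmt_5 (L lam0 τ₁ τ₂ x : ℝ) (hL : 0 < L) (hlam : 0 < lam0)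
    (h1 : 0 ≤ τ₁) (h12 : τ₁ < τ₂) (h2 : τ₂ ≤ 1) (hx : 0 < x) :
    ∑' k : ℕ, poissonPMF (L * x) k *
        (Tstat L lam0 τ₁ τ₂ k - ∑' j : ℕ, poissonPMF (L * x) j * Tstat L lam0 τ₁ τ₂ j) ^ 2
      = 4 * x / L * (x / (τ₂ - τ₁) - lam0) ^ 2 + 2 / L ^ 2 * (x ^ 2 / (τ₂ - τ₁) ^ 2) := by
  have hΔ : (0 : ℝ) < τ₂ - τ₁ := by linarith
  set ξ : ℝ := L * x with hξ
  set Δ : ℝ := τ₂ - τ₁ with hΔdef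
  set a : ℝ := 1 / (L ^ 2 * Δ) with ha
  set b : ℝ := 2 * lam0 / L with hb
  set c : ℝ := lam0 ^ 2 * Δ with hc
  -- factorial moments
  have H0 := hasSum_poisson_prod ξ 0
  have H1 := hasSum_poisson_prod ξ 1
  have H2 := hasSum_poisson_prod ξ 2
  have H3 := hasSum_poisson_prod ξ 3
  have H4 := hasSum_poisson_prod ξ 4
  -- Tstat in terms of falling factorials
  have hT : ∀ k : ℕ, Tstat L lam0 τ₁ τ₂ k
      = a * ((k : ℝ) * ((k : ℝ) - 1)) - b * (k : ℝ) + c := by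
    intro k
    have hL' : L ≠ 0 := ne_of_gt hL
    have hΔ' : Δ ≠ 0 := ne_of_gt hΔ
    simp only [Tstat, ha, hb, hc, hΔdef]
    field_simp
  -- the mean
  set μ : ℝ := a * ξ ^ 2 - b * ξ + c with hμ
  have hmean : HasSum (fun j : ℕ => poissonPMF ξ j * Tstat L lam0 τ₁ τ₂ j) μ := by
    have h := ((H2.mul_left a).sub (H1.mul_left b)).add (H0.mul_left c)
    have hval : a * ξ ^ 2 - b * ξ ^ 1 + c * ξ ^ 0 = μ := by
      simp [hμ]
    rw [hval] at h
    refine h.congr_fun fun k => ?_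
    simp only [Finset.prod_range_succ, Finset.prod_range_zero]
    rw [hT k]
    push_cast
    ring
  rw [hmean.tsum_eq]
  -- the variance
  have hvar : HasSum (fun k : ℕ => poissonPMF ξ k * (Tstat L lam0 τ₁ τ₂ k - μ) ^ 2)
      (a ^ 2 * ξ ^ 4 + (4 * a ^ 2 - 2 * a * b) * ξ ^ 3
        + (2 * a ^ 2 - 4 * a * b + b ^ 2 + 2 * a * (c - μ)) * ξ ^ 2
        + (b ^ 2 - 2 * b * (c - μ)) * ξ + (c - μ) ^ 2) := by
    have h := ((((H4.mul_left (a ^ 2)).add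
        (H3.mul_left (4 * a ^ 2 - 2 * a * b))).add
        (H2.mul_left (2 * a ^ 2 - 4 * a * b + b ^ 2 + 2 * a * (c - μ)))).add
        (H1.mul_left (b ^ 2 - 2 * b * (c - μ)))).add
        (H0.mul_left ((c - μ) ^ 2))
    have hval : a ^ 2 * ξ ^ 4 + (4 * a ^ 2 - 2 * a * b) * ξ ^ 3
        + (2 * a ^ 2 - 4 * a * b + b ^ 2 + 2 * a * (c - μ)) * ξ ^ 2
        + (b ^ 2 - 2 * b * (c - μ)) * ξ ^ 1 + (c - μ) ^ 2 * ξ ^ 0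
        = a ^ 2 * ξ ^ 4 + (4 * a ^ 2 - 2 * a * b) * ξ ^ 3
        + (2 * a ^ 2 - 4 * a * b + b ^ 2 + 2 * a * (c - μ)) * ξ ^ 2
        + (b ^ 2 - 2 * b * (c - μ)) * ξ + (c - μ) ^ 2 := by
      ring
    rw [hval] at h
    refine h.congr_fun fun k => ?_
    simp only [Finset.prod_range_succ, Finset.prod_range_zero]
    rw [hT k]
    push_cast
    ring
  rw [hvar.tsum_eq]
  -- algebraic identity
  have hL' : L ≠ 0 := ne_of_gt hL
  have hΔ' : Δ ≠ 0 := ne_of_gt hΔ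
  have hcμ : c - μ = b * ξ - a * ξ ^ 2 := by rw [hμ]; ring
  rw [hcμ]
  have hA : a = 1 / (L ^ 2 * Δ) := ha
  have hB : b = 2 * lam0 / L := hb
  rw [hA, hB, hξ, hΔdef]
  have hne : τ₂ - τ₁ ≠ 0 := ne_of_gt (by linarith)
  field_simp
  ring
end

section
/- Let P and Q be probability measures on a measurable space with P absolutely continuous with respect to Q and dP/dQ square-integrable under Q. Then for every measurable set A, |P(A) − Q(A)| ≤ (1/2)·√( E_Q[(dP/dQ)²] − 1 ). -/
open MeasureTheory

/-- Let `P ≪ Q` be probability measures with `dP/dQ ∈ L²(Q)`. Then for every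
measurable set `A`, `|P(A) − Q(A)| ≤ (1/2) √(E_Q[(dP/dQ)²] − 1)`. -/
theorem stmt_10 {Ω : Type*} [MeasurableSpace Ω] (P Q : Measure Ω)
    [IsProbabilityMeasure P] [IsProbabilityMeasure Q]
    (hac : P ≪ Q)
    (hL2 : MemLp (fun ω => (P.rnDeriv Q ω).toReal) 2 Q)
    (A : Set Ω) (hA : MeasurableSet A) :
    |(P A).toReal - (Q A).toReal|
      ≤ (1 / 2) * Real.sqrt ((∫ ω, ((P.rnDeriv Q ω).toReal) ^ 2 ∂Q) - 1) := by
  set f : Ω → ℝ := fun ω => (P.rnDeriv Q ω).toReal with hf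
  set g : Ω → ℝ := fun ω => f ω - 1 with hg
  have hfint : Integrable f Q := Measure.integrable_toReal_rnDeriv
  have hgint : Integrable g Q := hfint.sub (integrable_const 1)
  have hg2 : MemLp g 2 Q := hL2.sub (memLp_const 1)
  have hintf : ∫ ω, f ω ∂Q = 1 := by
    rw [hf, Measure.integral_toReal_rnDeriv hac]
    simp
  have hintg : ∫ ω, g ω ∂Q = 0 := by
    rw [hg]
    rw [integral_sub hfint (integrable_const 1), hintf]
    simp
  -- set integral identities
  have hsetf : ∀ s : Set Ω, ∫ ω in s, f ω ∂Q = (P s).toReal := fun s =>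
    Measure.setIntegral_toReal_rnDeriv hac s
  have hsetg : ∫ ω in A, g ω ∂Q = (P A).toReal - (Q A).toReal := by
    rw [hg, integral_sub (hfint.restrict) (integrable_const 1), hsetf]
    simp
    rfl
  -- split integral over A and Aᶜ
  have hsplit : ∫ ω in A, g ω ∂Q + ∫ ω in Aᶜ, g ω ∂Q = 0 := by
    rw [integral_add_compl hA hgint, hintg]
  have habs : |∫ ω in A, g ω ∂Q| ≤ (1/2) * ∫ ω, |g ω| ∂Q := by
    have h1 : |∫ ω in A, g ω ∂Q| ≤ ∫ ω in A, |g ω| ∂Q := by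
      simpa [Real.norm_eq_abs] using norm_integral_le_integral_norm (μ := Q.restrict A) g
    have h2 : |∫ ω in Aᶜ, g ω ∂Q| ≤ ∫ ω in Aᶜ, |g ω| ∂Q := by
      simpa [Real.norm_eq_abs] using norm_integral_le_integral_norm (μ := Q.restrict Aᶜ) g
    have heq : |∫ ω in A, g ω ∂Q| = |∫ ω in Aᶜ, g ω ∂Q| := by
      have : ∫ ω in Aᶜ, g ω ∂Q = - ∫ ω in A, g ω ∂Q := by linarith
      rw [this, abs_neg]
    have hsum : ∫ ω in A, |g ω| ∂Q + ∫ ω in Aᶜ, |g ω| ∂Q = ∫ ω, |g ω| ∂Q :=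
      integral_add_compl hA hgint.abs
    linarith
  -- Cauchy-Schwarz: ∫ |g| ≤ √(∫ g²)
  have hCS : ∫ ω, |g ω| ∂Q ≤ Real.sqrt (∫ ω, (g ω)^2 ∂Q) := by
    have hpq : Real.HolderConjugate 2 2 := Real.HolderConjugate.two_two
    have := integral_mul_le_Lp_mul_Lq_of_nonneg (μ := Q) hpq
      (f := fun ω => |g ω|) (g := fun _ => (1:ℝ))
      (Filter.Eventually.of_forall fun ω => abs_nonneg _)
      (Filter.Eventually.of_forall fun ω => zero_le_one)
      (by simpa using (show MemLp (fun ω => |g ω|) 2 Q from hg2.abs)) (by simpa using memLp_const (1:ℝ))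
    simp only [mul_one] at this
    calc ∫ ω, |g ω| ∂Q ≤ (∫ ω, |g ω| ^ (2:ℝ) ∂Q) ^ (1/(2:ℝ)) *
          (∫ _ω, (1:ℝ) ^ (2:ℝ) ∂Q) ^ (1/(2:ℝ)) := this
      _ = Real.sqrt (∫ ω, (g ω)^2 ∂Q) := by
          rw [Real.sqrt_eq_rpow]
          have h1 : ∫ ω, |g ω| ^ (2:ℝ) ∂Q = ∫ ω, (g ω)^2 ∂Q := by
            refine integral_congr_ae (Filter.Eventually.of_forall fun ω => ?_)
            show |g ω| ^ (2:ℝ) = (g ω) ^ 2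
            rw [show ((2:ℝ)) = ((2:ℕ):ℝ) by norm_num, Real.rpow_natCast, sq_abs]
          have h2 : ∫ _ω, (1:ℝ) ^ (2:ℝ) ∂Q = 1 := by simp
          rw [h1, h2, Real.one_rpow, mul_one]
  -- compute ∫ g² = ∫ f² - 1
  have hgsq : ∫ ω, (g ω)^2 ∂Q = (∫ ω, (f ω)^2 ∂Q) - 1 := by
    have hf2 : Integrable (fun ω => (f ω)^2) Q := hL2.integrable_sq
    have hsub : Integrable (fun ω => (f ω)^2 - 2 * f ω) Q := hf2.sub (hfint.const_mul 2)
    have e0 : ∫ ω, (g ω)^2 ∂Q = ∫ ω, ((f ω)^2 - 2 * f ω + 1) ∂Q :=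
      integral_congr_ae (Filter.Eventually.of_forall fun ω => by rw [hg]; ring)
    rw [e0, integral_add hsub (integrable_const 1),
      integral_sub hf2 (hfint.const_mul 2), integral_const_mul, hintf, integral_const]
    simp
    ring
  rw [← hsetg]
  calc |∫ ω in A, g ω ∂Q| ≤ (1/2) * ∫ ω, |g ω| ∂Q := habs
    _ ≤ (1/2) * Real.sqrt (∫ ω, (g ω)^2 ∂Q) := by linarith
    _ = (1/2) * Real.sqrt ((∫ ω, (f ω)^2 ∂Q) - 1) := by rw [hgsq]
end

section
/- Let P and Q be probability measures on a measurable space with P ≪ Q and dP/dQ ∈ L²(Q), let α, β ∈ (0,1) with α + β < 1, and suppose E_Q[(dP/dQ)²] ≤ 1 + 4(1−α−β)². Then for every measurable set A (rejection region of a test) with Q(A) ≤ α, one has P(Aᶜ) ≥ β. -/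
open MeasureTheory

/-- Let `P ≪ Q` be probability measures with `dP/dQ ∈ L²(Q)`, `α, β ∈ (0,1)` with
`α + β < 1` and `E_Q[(dP/dQ)²] ≤ 1 + 4(1−α−β)²`. Then for every measurable set `A`
with `Q(A) ≤ α`, one has `P(Aᶜ) ≥ β`. -/
theorem stmt_11 {Ω : Type*} [MeasurableSpace Ω] (P Q : Measure Ω)
    [IsProbabilityMeasure P] [IsProbabilityMeasure Q]
    (hac : P ≪ Q)
    (hL2 : MemLp (fun ω => (P.rnDeriv Q ω).toReal) 2 Q)
    (α β : ℝ) (hα : α ∈ Set.Ioo (0 : ℝ) 1) (hβ : β ∈ Set.Ioo (0 : ℝ) 1)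
    (hαβ : α + β < 1)
    (hchi : ∫ ω, ((P.rnDeriv Q ω).toReal) ^ 2 ∂Q ≤ 1 + 4 * (1 - α - β) ^ 2)
    (A : Set Ω) (hA : MeasurableSet A) (hQA : (Q A).toReal ≤ α) :
    β ≤ (P Aᶜ).toReal := by
  set f : Ω → ℝ := fun ω => (P.rnDeriv Q ω).toReal with hfdef
  set q : ℝ := (Q A).toReal with hqdef
  set t : ℝ := 1 - α - β with htdef
  have ht : 0 < t := by simp only [htdef]; linarith
  have hq0 : 0 ≤ q := ENNReal.toReal_nonneg
  -- basic integrability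
  have hfi : Integrable f Q := hL2.integrable (by norm_num)
  have hfsq : Integrable (fun ω => f ω ^ 2) Q := hL2.integrable_sq
  have hintf : ∫ ω, f ω ∂Q = 1 := by
    rw [hfdef, Measure.integral_toReal_rnDeriv hac]
    simp
  have hintAf : ∫ ω in A, f ω ∂Q = (P A).toReal := by
    rw [hfdef, Measure.setIntegral_toReal_rnDeriv hac A]
    rfl
  -- the centered functions
  set g : Ω → ℝ := fun ω => f ω - 1 with hgdef
  set χ : Ω → ℝ := A.indicator (fun _ => (1 : ℝ)) with hχdef
  set h : Ω → ℝ := fun ω => χ ω - q with hhdef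
  have hgL2 : MemLp g 2 Q := hL2.sub (memLp_const 1)
  have hχL2 : MemLp χ 2 Q := memLp_indicator_const 2 hA (1 : ℝ) (Or.inr (measure_ne_top Q A))
  have hhL2 : MemLp h 2 Q := hχL2.sub (memLp_const q)
  have hgi : Integrable g Q := hfi.sub (integrable_const 1)
  have hχi : Integrable χ Q := hχL2.integrable (by norm_num)
  have hintχ : ∫ ω, χ ω ∂Q = q := by
    rw [hχdef, integral_indicator_const _ hA]
    simp [hqdef, Measure.real]
  have hintg : ∫ ω, g ω ∂Q = 0 := by
    rw [hgdef]
    rw [integral_sub hfi (integrable_const 1), hintf]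
    simp
  -- value of ∫ g h
  have hgχ : (fun ω => g ω * χ ω) = A.indicator g := by
    funext ω
    by_cases hω : ω ∈ A <;> simp [hχdef, Set.indicator_apply, hω]
  have hintgh : ∫ ω, g ω * h ω ∂Q = (P A).toReal - q := by
    have heq : (fun ω => g ω * h ω) = fun ω => g ω * χ ω - q * g ω := by
      funext ω; simp [hhdef]; ring
    rw [heq, integral_sub (by rw [hgχ]; exact hgi.indicator hA)
      (hgi.const_mul q), hgχ, integral_indicator hA, integral_const_mul, hintg]
    have : ∫ ω in A, g ω ∂Q = (P A).toReal - q := by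
      rw [hgdef]
      rw [integral_sub (hfi.integrableOn) (integrableOn_const (measure_lt_top Q A).ne),
        hintAf]
      simp [hqdef, Measure.restrict_apply_univ, Measure.real]
    rw [this]; ring
  -- second moments
  have hintg2 : ∫ ω, g ω ^ 2 ∂Q ≤ 4 * t ^ 2 := by
    have heq : (fun ω => g ω ^ 2) = fun ω => f ω ^ 2 - 2 * f ω + 1 := by
      funext ω; simp [hgdef]; ring
    have hI1 : Integrable (fun ω => f ω ^ 2 - 2 * f ω) Q := hfsq.sub (hfi.const_mul 2)
    rw [heq]
    rw [integral_add hI1 (integrable_const 1),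
      integral_sub hfsq (hfi.const_mul 2), integral_const_mul, hintf]
    simp only [integral_const, probReal_univ, measure_univ, ENNReal.toReal_one, smul_eq_mul, one_mul]
    have hchi' : ∫ a, f a ^ 2 ∂Q ≤ 1 + 4 * t ^ 2 := hchi
    linarith
  have hinth2 : ∫ ω, h ω ^ 2 ∂Q ≤ 1 / 4 := by
    have heq : (fun ω => h ω ^ 2) = fun ω => (1 - 2 * q) * χ ω + q ^ 2 := by
      funext ω
      by_cases hω : ω ∈ A <;> simp [hhdef, hχdef, Set.indicator_apply, hω] <;> ring
    rw [heq, integral_add (hχi.const_mul _) (integrable_const _), integral_const_mul, hintχ]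
    simp only [integral_const, probReal_univ, measure_univ, ENNReal.toReal_one, smul_eq_mul, one_mul]
    nlinarith [sq_nonneg (1 - 2 * q)]
  -- Cauchy–Schwarz
  have hpq : (2 : ℝ).HolderConjugate 2 := by rw [Real.holderConjugate_iff]; constructor <;> norm_num
  have h2 : ENNReal.ofReal (2 : ℝ) = 2 := by norm_num
  have hCS := integral_mul_norm_le_Lp_mul_Lq hpq (μ := Q) (f := g) (g := h)
    (h2 ▸ hgL2) (h2 ▸ hhL2)
  have hnorm2 : ∀ u : Ω → ℝ, (∫ ω, ‖u ω‖ ^ (2 : ℝ) ∂Q) = ∫ ω, u ω ^ 2 ∂Q := by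
    intro u
    refine integral_congr_ae (Filter.Eventually.of_forall fun ω => ?_)
    have : ‖u ω‖ ^ (2 : ℝ) = ‖u ω‖ ^ (2 : ℕ) := by
      rw [← Real.rpow_natCast ‖u ω‖ 2]; norm_num
    simp only [this]
    simp [sq_abs]
  rw [hnorm2 g, hnorm2 h] at hCS
  have habs : ∫ ω, g ω * h ω ∂Q ≤ ∫ ω, ‖g ω‖ * ‖h ω‖ ∂Q := by
    calc ∫ ω, g ω * h ω ∂Q ≤ ‖∫ ω, g ω * h ω ∂Q‖ := le_abs_self _
      _ ≤ ∫ ω, ‖g ω * h ω‖ ∂Q := norm_integral_le_integral_norm _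
      _ = ∫ ω, ‖g ω‖ * ‖h ω‖ ∂Q := by
          refine integral_congr_ae (Filter.Eventually.of_forall fun ω => ?_)
          simp [abs_mul]
  have hg2nn : 0 ≤ ∫ ω, g ω ^ 2 ∂Q := integral_nonneg fun ω => sq_nonneg _
  have hh2nn : 0 ≤ ∫ ω, h ω ^ 2 ∂Q := integral_nonneg fun ω => sq_nonneg _
  have hrhs : (∫ ω, g ω ^ 2 ∂Q) ^ (1 / (2:ℝ)) * (∫ ω, h ω ^ 2 ∂Q) ^ (1 / (2:ℝ)) ≤ t := by
    rw [← Real.sqrt_eq_rpow, ← Real.sqrt_eq_rpow]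
    calc Real.sqrt (∫ ω, g ω ^ 2 ∂Q) * Real.sqrt (∫ ω, h ω ^ 2 ∂Q)
        ≤ Real.sqrt (4 * t ^ 2) * Real.sqrt (1 / 4) := by
          exact mul_le_mul (Real.sqrt_le_sqrt hintg2) (Real.sqrt_le_sqrt hinth2)
            (Real.sqrt_nonneg _) (Real.sqrt_nonneg _)
      _ = t := by
          rw [show (4 : ℝ) * t ^ 2 = (2 * t) ^ 2 by ring, Real.sqrt_sq (by positivity),
            show (1 / 4 : ℝ) = (1 / 2) ^ 2 by norm_num, Real.sqrt_sq (by norm_num)]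
          ring
  have hkey : (P A).toReal - q ≤ t := by
    rw [← hintgh]
    exact le_trans habs (le_trans hCS hrhs)
  -- conclude
  have hPAc : (P Aᶜ).toReal = 1 - (P A).toReal := by
    rw [prob_compl_eq_one_sub hA, ENNReal.toReal_sub_of_le prob_le_one (by simp)]
    simp
  rw [hPAc]
  simp only [htdef] at hkey
  linarith
end
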